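/- With A₁,…,A_k, B₁,…,B_k, C forming a commuting set of diagonalizable n×n complex matrices, the equation ∑_j A_j X B_j = C has a solution if and only if X̂ = (∑_j A_j B_j)^D C is a solution. -/

import Mathlib

open Matrix

/-- A matrix is diagonalizable. -/
def Diagonalizable {n : ℕ} (M : Matrix (Fin n) (Fin n) ℂ) : Prop :=
  ∃ (S : Matrix (Fin n) (Fin n) ℂ) (d : Fin n → ℂ),
    IsUnit S.det ∧ S⁻¹ * M * S = Matrix.diagonal d

/-- `D` is the Drazin inverse of `A`. -/
def IsDrazinInverse {n : ℕ} (A D : Matrix (Fin n) (Fin n) ℂ) : Prop :=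
  (∃ k : ℕ, A ^ (k + 1) * D = A ^ k) ∧ D * A * D = D ∧ A * D = D * A

namespace DZ

open Polynomial

variable {n : ℕ}

theorem commute_aeval {M S : Matrix (Fin n) (Fin n) ℂ} (h : M * S = S * M) (q : ℂ[X]) :
    M * Polynomial.aeval S q = Polynomial.aeval S q * M := by
  have hc : Commute M S := h
  induction q using Polynomial.induction_on' with
  | add p r hp hr => simp only [map_add, mul_add, add_mul, hp, hr]
  | monomial k a =>
    rw [aeval_monomial]
    have h1 : Commute M (algebraMap ℂ (Matrix (Fin n) (Fin n) ℂ) a) := (Algebra.commutes a M).symm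
    exact (h1.mul_right (hc.pow_right k)).eq

theorem conj_pow {P : Matrix (Fin n) (Fin n) ℂ} (hP : IsUnit P.det)
    (M : Matrix (Fin n) (Fin n) ℂ) (k : ℕ) :
    (P * M * P⁻¹) ^ k = P * M ^ k * P⁻¹ := by
  induction k with
  | zero => simp [Matrix.mul_nonsing_inv P hP]
  | succ k ih =>
    rw [pow_succ, ih, pow_succ]
    calc P * M ^ k * P⁻¹ * (P * M * P⁻¹)
        = P * M ^ k * ((P⁻¹ * P) * (M * P⁻¹)) := by simp only [Matrix.mul_assoc]
      _ = P * (M ^ k * M) * P⁻¹ := by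
          rw [Matrix.nonsing_inv_mul P hP]; simp only [Matrix.one_mul, Matrix.mul_assoc]

theorem aeval_conj {P : Matrix (Fin n) (Fin n) ℂ} (hP : IsUnit P.det)
    (M : Matrix (Fin n) (Fin n) ℂ) (q : ℂ[X]) :
    Polynomial.aeval (P * M * P⁻¹) q = P * Polynomial.aeval M q * P⁻¹ := by
  induction q using Polynomial.induction_on' with
  | add p r hp hr => simp only [map_add, Matrix.mul_add, Matrix.add_mul, hp, hr]
  | monomial k a =>
    rw [aeval_monomial, aeval_monomial, conj_pow hP]
    calc algebraMap ℂ _ a * (P * M ^ k * P⁻¹)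
        = algebraMap ℂ _ a * P * M ^ k * P⁻¹ := by simp only [Matrix.mul_assoc]
      _ = P * algebraMap ℂ _ a * M ^ k * P⁻¹ := by rw [Algebra.commutes]
      _ = P * (algebraMap ℂ _ a * M ^ k) * P⁻¹ := by simp only [Matrix.mul_assoc]

theorem aeval_diagonal (d : Fin n → ℂ) (q : ℂ[X]) :
    Polynomial.aeval (diagonal d) q = diagonal (fun i => q.eval (d i)) := by
  induction q using Polynomial.induction_on' with
  | add p r hp hr =>
    simp only [map_add, hp, hr, eval_add]
    rw [diagonal_add]
  | monomial k a =>
    rw [aeval_monomial, diagonal_pow]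
    simp only [eval_monomial]
    rw [Matrix.algebraMap_eq_diagonal, diagonal_mul_diagonal]
    rfl

theorem idem_eq_zero_of_trace {m : Type*} [Fintype m] [DecidableEq m] {E : Matrix m m ℂ}
    (hE : E * E = E) (ht : E.trace = 0) : E = 0 := by
  set f : (m → ℂ) →ₗ[ℂ] (m → ℂ) := Matrix.toLin' E with hf
  have hff : f ∘ₗ f = f := by rw [hf, ← Matrix.toLin'_mul, hE]
  have hproj : LinearMap.IsProj (LinearMap.range f) f := by
    constructor
    · intro x; exact LinearMap.mem_range_self f x
    · rintro x ⟨y, rfl⟩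
      exact LinearMap.congr_fun hff y
  have htr : LinearMap.trace ℂ (m → ℂ) f = (Module.finrank ℂ (LinearMap.range f) : ℂ) :=
    hproj.trace
  have htr2 : LinearMap.trace ℂ (m → ℂ) f = E.trace := by
    rw [LinearMap.trace_eq_matrix_trace ℂ (Pi.basisFun ℂ m) f,
      LinearMap.toMatrix_eq_toMatrix', hf, LinearMap.toMatrix'_toLin']
  have h0 : Module.finrank ℂ (LinearMap.range f) = 0 := by
    have : (Module.finrank ℂ (LinearMap.range f) : ℂ) = 0 := by rw [← htr, htr2, ht]
    exact_mod_cast this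
  have hbot : LinearMap.range f = ⊥ := Submodule.finrank_eq_zero.mp h0
  have hf0 : f = 0 := LinearMap.range_eq_bot.mp hbot
  have : Matrix.toLin' E = Matrix.toLin' (0 : Matrix m m ℂ) := by
    rw [← hf, hf0]; simp
  exact Matrix.toLin'.injective this

theorem commring_drazin_unique {R : Type*} [CommRing R] (x a b : R) (K : ℕ)
    (ha1 : x ^ (K + 1) * a = x ^ K) (hb1 : x ^ (K + 1) * b = x ^ K)
    (ha2 : a * x * a = a) (hb2 : b * x * b = b) : a = b := by
  have hpow : ∀ (c : R), c * x * c = c → ∀ m : ℕ, c = c ^ (m + 1) * x ^ m := by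
    intro c hc m
    induction m with
    | zero => simp
    | succ m ih =>
      calc c = c ^ (m + 1) * x ^ m := ih
        _ = c ^ m * (c * x * c) * x ^ m := by rw [hc]; ring
        _ = c ^ (m + 2) * x ^ (m + 1) := by ring
  have hidem : ∀ (c : R), c * x * c = c → ∀ m : ℕ, (c * x) ^ (m + 1) = c * x := by
    intro c hc m
    have : IsIdempotentElem (c * x) := by
      show c * x * (c * x) = c * x
      calc c * x * (c * x) = (c * x * c) * x := by ring
        _ = c * x := by rw [hc]
    exact this.pow_succ_eq m
  have haxb : a = a * x * b := by
    calc a = a ^ (K + 1) * x ^ K := hpow a ha2 K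
      _ = a ^ (K + 1) * (x ^ (K + 1) * b) := by rw [hb1]
      _ = (a * x) ^ (K + 1) * b := by ring
      _ = a * x * b := by rw [hidem a ha2 K]
  have hbxa : b = b * x * a := by
    calc b = b ^ (K + 1) * x ^ K := hpow b hb2 K
      _ = b ^ (K + 1) * (x ^ (K + 1) * a) := by rw [ha1]
      _ = (b * x) ^ (K + 1) * a := by ring
      _ = b * x * a := by rw [hidem b hb2 K]
  calc a = a * x * b := haxb
    _ = b * x * a := by ring
    _ = b := hbxa.symm

theorem exists_poly_drazin (S : Matrix (Fin n) (Fin n) ℂ) :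
    ∃ (D₀ : Matrix (Fin n) (Fin n) ℂ) (r : ℕ),
      S ^ (r + 1) * D₀ = S ^ r ∧ D₀ * S * D₀ = D₀ ∧
      (∀ M : Matrix (Fin n) (Fin n) ℂ, M * S = S * M → M * D₀ = D₀ * M) ∧
      (Squarefree (minpoly ℂ S) → S ^ 2 * D₀ = S) := by
  classical
  set m := minpoly ℂ S with hmdef
  have hS_int : IsIntegral ℂ S := Algebra.IsIntegral.isIntegral S
  have hm0 : m ≠ 0 := minpoly.ne_zero hS_int
  set r := m.rootMultiplicity 0 with hrdef
  obtain ⟨q, hq, hndvd⟩ := m.exists_eq_pow_rootMultiplicity_mul_and_not_dvd hm0 0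
  rw [map_zero, sub_zero] at hq hndvd
  rw [← hrdef] at hq
  have hc : q.coeff 0 ≠ 0 := by rwa [Polynomial.X_dvd_iff] at hndvd
  set c := q.coeff 0 with hcdef
  set u : ℂ[X] := Polynomial.C (-c⁻¹) * q.divX with hu
  have hXu : X * u - 1 = Polynomial.C (-c⁻¹) * q := by
    have h1 : X * q.divX = q - C c := by
      rw [eq_sub_iff_add_eq]; exact q.X_mul_divX_add
    have h2 : Polynomial.C (-c⁻¹) * Polynomial.C c = -1 := by
      rw [← C_mul]
      simp [inv_mul_cancel₀ hc]
    calc X * u - 1 = C (-c⁻¹) * (X * q.divX) - 1 := by rw [hu]; ring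
      _ = C (-c⁻¹) * (q - C c) - 1 := by rw [h1]
      _ = C (-c⁻¹) * q - (C (-c⁻¹) * C c + 1) := by ring
      _ = C (-c⁻¹) * q := by rw [h2]; ring
  have hqd : q ∣ (X * u) ^ (r + 1) - 1 := by
    have h := sub_dvd_pow_sub_pow (X * u) 1 (r + 1)
    rw [one_pow] at h
    refine dvd_trans ?_ h
    rw [hXu]
    exact Dvd.dvd.mul_left dvd_rfl _
  obtain ⟨w, hw⟩ := hqd
  set d : ℂ[X] := X ^ r * u ^ (r + 1) with hd
  set D₀ := Polynomial.aeval S d with hD₀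
  have hm_dvd : ∀ z : ℂ[X], m ∣ z → Polynomial.aeval S z = 0 := by
    intro z hz
    obtain ⟨y, hy⟩ := hz
    rw [hy, _root_.map_mul, hmdef, minpoly.aeval, zero_mul]
  have hP1 : S ^ (r + 1) * D₀ = S ^ r := by
    have hdvd : m ∣ X ^ (r + 1) * d - X ^ r := by
      have heq : X ^ (r + 1) * d - X ^ r = (X ^ r * q) * w := by
        calc X ^ (r + 1) * d - X ^ r = X ^ r * ((X * u) ^ (r + 1) - 1) := by rw [hd]; ring
          _ = X ^ r * (q * w) := by rw [hw]
          _ = (X ^ r * q) * w := by ring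
      rw [heq, hq]
      exact Dvd.intro w rfl
    have h0 := hm_dvd _ hdvd
    rw [map_sub, _root_.map_mul, map_pow, map_pow, aeval_X, sub_eq_zero] at h0
    exact h0
  have hP2 : D₀ * S * D₀ = D₀ := by
    have hdvd : m ∣ d * X * d - d := by
      have heq : d * X * d - d = (X ^ r * q) * (u ^ (r + 1) * w) := by
        calc d * X * d - d = X ^ r * u ^ (r + 1) * ((X * u) ^ (r + 1) - 1) := by rw [hd]; ring
          _ = X ^ r * u ^ (r + 1) * (q * w) := by rw [hw]
          _ = (X ^ r * q) * (u ^ (r + 1) * w) := by ring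
      rw [heq, hq]
      exact Dvd.intro _ rfl
    have h0 := hm_dvd _ hdvd
    rw [map_sub, _root_.map_mul, _root_.map_mul, aeval_X, sub_eq_zero] at h0
    exact h0
  have hP3 : ∀ M : Matrix (Fin n) (Fin n) ℂ, M * S = S * M → M * D₀ = D₀ * M :=
    fun M hM => commute_aeval hM d
  refine ⟨D₀, r, hP1, hP2, hP3, ?_⟩
  intro hsf
  have hr1 : r ≤ 1 := by
    by_contra hcon
    push_neg at hcon
    have hx2 : (X : ℂ[X]) * X ∣ m := by
      have h1 : (X : ℂ[X]) * X ∣ X ^ r := by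
        rw [← pow_two]
        exact pow_dvd_pow X hcon
      rw [hq]
      exact h1.mul_right q
    exact Polynomial.not_isUnit_X (hsf X hx2)
  interval_cases r
  · have h1 : S * D₀ = 1 := by simpa using hP1
    rw [pow_two, Matrix.mul_assoc, h1, Matrix.mul_one]
  · simpa using hP1

theorem drazin_eq (S D D₀ : Matrix (Fin n) (Fin n) ℂ) (hD : _root_.IsDrazinInverse S D)
    (r : ℕ) (h1 : S ^ (r + 1) * D₀ = S ^ r) (h2 : D₀ * S * D₀ = D₀)
    (hcomm : ∀ M : Matrix (Fin n) (Fin n) ℂ, M * S = S * M → M * D₀ = D₀ * M) :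
    D = D₀ := by
  obtain ⟨⟨k₁, hk₁⟩, hDSD, hSD⟩ := hD
  have ladder : ∀ (E : Matrix (Fin n) (Fin n) ℂ) (t : ℕ), S ^ (t + 1) * E = S ^ t →
      ∀ K, t ≤ K → S ^ (K + 1) * E = S ^ K := by
    intro E t h K hK
    obtain ⟨v, rfl⟩ := Nat.exists_eq_add_of_le hK
    have he : S ^ (t + v + 1) = S ^ v * S ^ (t + 1) := by
      rw [← pow_add]; ring_nf
    rw [he, Matrix.mul_assoc, h, ← pow_add]
    ring_nf
  set K := max k₁ r with hK
  have hKD : S ^ (K + 1) * D = S ^ K := ladder D k₁ hk₁ K (le_max_left _ _)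
  have hKD₀ : S ^ (K + 1) * D₀ = S ^ K := ladder D₀ r h1 K (le_max_right _ _)
  have hDS : D * S = S * D := hSD.symm
  have hD₀S : S * D₀ = D₀ * S := hcomm S rfl
  have hDD₀ : D * D₀ = D₀ * D := hcomm D hDS
  set s : Set (Matrix (Fin n) (Fin n) ℂ) := {S, D, D₀} with hs
  have hpair : ∀ a ∈ s, ∀ b ∈ s, a * b = b * a := by
    intro a ha b hb
    simp only [hs, Set.mem_insert_iff, Set.mem_singleton_iff] at ha hb
    rcases ha with rfl | rfl | rfl <;> rcases hb with rfl | rfl | rfl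
    · rfl
    · exact hSD
    · exact hD₀S
    · exact hDS
    · rfl
    · exact hDD₀
    · exact hD₀S.symm
    · exact hDD₀.symm
    · rfl
  letI : CommRing (Algebra.adjoin ℂ s) := Algebra.adjoinCommRingOfComm ℂ hpair
  have hSmem : S ∈ Algebra.adjoin ℂ s := Algebra.subset_adjoin (by simp [hs])
  have hDmem : D ∈ Algebra.adjoin ℂ s := Algebra.subset_adjoin (by simp [hs])
  have hD₀mem : D₀ ∈ Algebra.adjoin ℂ s := Algebra.subset_adjoin (by simp [hs])
  have key := commring_drazin_unique (R := Algebra.adjoin ℂ s)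
    ⟨S, hSmem⟩ ⟨D, hDmem⟩ ⟨D₀, hD₀mem⟩ K
    (Subtype.ext (by push_cast; exact hKD))
    (Subtype.ext (by push_cast; exact hKD₀))
    (Subtype.ext (by push_cast; exact hDSD))
    (Subtype.ext (by push_cast; exact h2))
  exact congrArg Subtype.val key

theorem conj_eq {P M : Matrix (Fin n) (Fin n) ℂ} {d : Fin n → ℂ} (hP : IsUnit P.det)
    (h : P⁻¹ * M * P = diagonal d) : M = P * diagonal d * P⁻¹ := by
  calc M = (P * P⁻¹) * M * (P * P⁻¹) := by
        rw [Matrix.mul_nonsing_inv P hP]; simp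
    _ = P * (P⁻¹ * M * P) * P⁻¹ := by simp only [Matrix.mul_assoc]
    _ = P * diagonal d * P⁻¹ := by rw [h]

theorem isSemisimple_of_diagonalizable {M : Matrix (Fin n) (Fin n) ℂ}
    (h : Diagonalizable M) :
    Module.End.IsSemisimple (Matrix.toLinAlgEquiv' M) := by
  classical
  obtain ⟨P, dg, hP, hPD⟩ := h
  have hM : M = P * diagonal dg * P⁻¹ := conj_eq hP hPD
  set s : Finset ℂ := Finset.image dg Finset.univ with hs
  have hsq : Squarefree (∏ z ∈ s, (X - C z)) := by
    apply Polynomial.Separable.squarefree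
    exact separable_prod_X_sub_C_iff'.mpr (fun x _ y _ hxy => hxy)
  have haev : Polynomial.aeval M (∏ z ∈ s, (X - C z)) = 0 := by
    rw [hM, aeval_conj hP, aeval_diagonal]
    have hz : (fun i => Polynomial.eval (dg i) (∏ z ∈ s, (X - C z))) = fun _ => (0 : ℂ) := by
      funext i
      rw [Polynomial.eval_prod]
      apply Finset.prod_eq_zero (Finset.mem_image_of_mem dg (Finset.mem_univ i))
      simp
    rw [hz]
    simp
  have hcast := Polynomial.aeval_algHom_apply
    (Matrix.toLinAlgEquiv'.toAlgHom : Matrix (Fin n) (Fin n) ℂ →ₐ[ℂ] _) M (∏ z ∈ s, (X - C z))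
  exact Module.End.isSemisimple_of_squarefree_aeval_eq_zero hsq (by simpa [haev] using hcast)

theorem isSemisimple_sum {V : Type*} [AddCommGroup V] [Module ℂ V] [FiniteDimensional ℂ V]
    {ι : Type*} (t : Finset ι) (f : ι → Module.End ℂ V)
    (hc : ∀ i ∈ t, ∀ j ∈ t, Commute (f i) (f j))
    (hs : ∀ i ∈ t, (f i).IsSemisimple) :
    (∑ i ∈ t, f i).IsSemisimple := by
  classical
  induction t using Finset.cons_induction with
  | empty =>
    rw [Finset.sum_empty]
    exact Module.End.isSemisimple_of_squarefree_aeval_eq_zero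
      (Polynomial.prime_X.squarefree) (by simp)
  | cons a t ha ih =>
    rw [Finset.sum_cons]
    refine Module.End.IsSemisimple.add_of_commute ?_ (hs a (Finset.mem_cons_self a t)) ?_
    · exact Commute.sum_right t _ _ fun i hi =>
        hc a (Finset.mem_cons_self a t) i (Finset.mem_cons_of_mem hi)
    · exact ih (fun i hi j hj => hc i (Finset.mem_cons_of_mem hi) j (Finset.mem_cons_of_mem hj))
        (fun i hi => hs i (Finset.mem_cons_of_mem hi))

theorem minpoly_squarefree_sum {k : ℕ} (A B : Fin k → Matrix (Fin n) (Fin n) ℂ)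
    (hdA : ∀ j, Diagonalizable (A j)) (hdB : ∀ j, Diagonalizable (B j))
    (hAA : ∀ j l, A j * A l = A l * A j)
    (hBB : ∀ j l, B j * B l = B l * B j)
    (hAB : ∀ j l, A j * B l = B l * A j) :
    Squarefree (minpoly ℂ (∑ j, A j * B j)) := by
  set e := (Matrix.toLinAlgEquiv' : Matrix (Fin n) (Fin n) ℂ ≃ₐ[ℂ] _) with he
  have hmul : ∀ j, e (A j * B j) = e (A j) * e (B j) := fun j => map_mul e _ _
  have hprod_ss : ∀ j, Module.End.IsSemisimple (e (A j * B j)) := by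
    intro j
    rw [hmul]
    exact Module.End.IsSemisimple.mul_of_commute
      (by show e (A j) * e (B j) = e (B j) * e (A j); rw [← _root_.map_mul, ← _root_.map_mul, hAB])
      (isSemisimple_of_diagonalizable (hdA j)) (isSemisimple_of_diagonalizable (hdB j))
  have hcomm : ∀ i j : Fin k, Commute (e (A i * B i)) (e (A j * B j)) := by
    intro i j
    show e _ * e _ = e _ * e _
    rw [← _root_.map_mul, ← _root_.map_mul]
    congr 1
    calc A i * B i * (A j * B j) = A i * (B i * A j) * B j := by
          simp only [Matrix.mul_assoc]
      _ = A i * (A j * B i) * B j := by rw [← hAB]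
      _ = (A i * A j) * (B i * B j) := by simp only [Matrix.mul_assoc]
      _ = (A j * A i) * (B j * B i) := by rw [hAA, hBB]
      _ = A j * (A i * B j) * B i := by simp only [Matrix.mul_assoc]
      _ = A j * (B j * A i) * B i := by rw [hAB]
      _ = A j * B j * (A i * B i) := by simp only [Matrix.mul_assoc]
  have hsum_ss : Module.End.IsSemisimple (∑ j, e (A j * B j)) :=
    isSemisimple_sum Finset.univ _ (fun i _ j _ => hcomm i j) (fun i _ => hprod_ss i)
  have hes : e (∑ j, A j * B j) = ∑ j, e (A j * B j) := map_sum e _ _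
  have hsq : Squarefree (minpoly ℂ (e (∑ j, A j * B j))) := by
    rw [hes]
    exact Module.End.IsSemisimple.minpoly_squarefree hsum_ss
  rwa [minpoly.algEquiv_eq] at hsq

end DZ

open DZ Polynomial in
/-- For a commuting set of diagonalizable matrices, `∑ j, A j * X * B j = C` has a
solution iff `X̂ = (∑ j, A j * B j)^D * C` is a solution. -/
theorem stmt6 {n k : ℕ} (A B : Fin k → Matrix (Fin n) (Fin n) ℂ)
    (C : Matrix (Fin n) (Fin n) ℂ)
    (hdA : ∀ j, Diagonalizable (A j)) (hdB : ∀ j, Diagonalizable (B j))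
    (hdC : Diagonalizable C)
    (hAA : ∀ j l, A j * A l = A l * A j)
    (hBB : ∀ j l, B j * B l = B l * B j)
    (hAB : ∀ j l, A j * B l = B l * A j)
    (hAC : ∀ j, A j * C = C * A j)
    (hBC : ∀ j, B j * C = C * B j)
    (D : Matrix (Fin n) (Fin n) ℂ)
    (hD : IsDrazinInverse (∑ j, A j * B j) D) :
    (∃ X : Matrix (Fin n) (Fin n) ℂ, ∑ j, A j * X * B j = C) ↔
      ∑ j, A j * (D * C) * B j = C := by
  classical
  set S := ∑ j, A j * B j with hS
  -- basic commutation facts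
  have hsumcomm : ∀ W : Matrix (Fin n) (Fin n) ℂ,
      (∀ j, W * (A j * B j) = (A j * B j) * W) → W * S = S * W := by
    intro W hW
    rw [hS, Finset.mul_sum, Finset.sum_mul]
    exact Finset.sum_congr rfl fun j _ => hW j
  have hSA : ∀ j, A j * S = S * A j := by
    intro j
    refine hsumcomm (A j) fun l => ?_
    calc A j * (A l * B l) = (A j * A l) * B l := by rw [Matrix.mul_assoc]
      _ = (A l * A j) * B l := by rw [hAA]
      _ = A l * (A j * B l) := by rw [Matrix.mul_assoc]
      _ = A l * (B l * A j) := by rw [hAB]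
      _ = (A l * B l) * A j := by rw [Matrix.mul_assoc]
  have hSB : ∀ j, B j * S = S * B j := by
    intro j
    refine hsumcomm (B j) fun l => ?_
    calc B j * (A l * B l) = (B j * A l) * B l := by rw [Matrix.mul_assoc]
      _ = (A l * B j) * B l := by rw [← hAB]
      _ = A l * (B j * B l) := by rw [Matrix.mul_assoc]
      _ = A l * (B l * B j) := by rw [hBB]
      _ = (A l * B l) * B j := by rw [Matrix.mul_assoc]
  have hCS : C * S = S * C := by
    refine hsumcomm C fun l => ?_
    calc C * (A l * B l) = (C * A l) * B l := by rw [Matrix.mul_assoc]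
      _ = (A l * C) * B l := by rw [← hAC]
      _ = A l * (C * B l) := by rw [Matrix.mul_assoc]
      _ = A l * (B l * C) := by rw [← hBC]
      _ = (A l * B l) * C := by rw [Matrix.mul_assoc]
  obtain ⟨D₀, r, hP1, hP2, hP3, hP4⟩ := exists_poly_drazin S
  have hsf : Squarefree (minpoly ℂ S) := by
    rw [hS]
    exact minpoly_squarefree_sum A B hdA hdB hAA hBB hAB
  have hDeq : D = D₀ := drazin_eq S D D₀ hD r hP1 hP2 hP3
  have hDcomm : ∀ M : Matrix (Fin n) (Fin n) ℂ, M * S = S * M → M * D = D * M := by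
    rw [hDeq]; exact hP3
  have hS2D : S ^ 2 * D = S := by rw [hDeq]; exact hP4 hsf
  have hSD : S * D = D * S := hD.2.2
  have hDSD : D * S * D = D := hD.2.1
  have hDA : ∀ j, A j * D = D * A j := fun j => hDcomm _ (hSA j)
  have hDB : ∀ j, B j * D = D * B j := fun j => hDcomm _ (hSB j)
  have hDC : C * D = D * C := hDcomm _ hCS
  have hSDS : S * D * S = S := by
    rw [Matrix.mul_assoc, ← hSD, ← Matrix.mul_assoc, ← pow_two, hS2D]
  -- the sum with D*C equals D*C*S
  have hsumDC : ∑ j, A j * (D * C) * B j = D * C * S := by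
    rw [hS, Finset.mul_sum]
    refine Finset.sum_congr rfl fun j _ => ?_
    calc A j * (D * C) * B j = (A j * D) * C * B j := by simp only [Matrix.mul_assoc]
      _ = D * (A j * C) * B j := by rw [hDA]; simp only [Matrix.mul_assoc]
      _ = D * (C * A j) * B j := by rw [hAC]
      _ = D * C * (A j * B j) := by simp only [Matrix.mul_assoc]
  constructor
  · rintro ⟨X, hX⟩
    set Q : Matrix (Fin n) (Fin n) ℂ := 1 - S * D with hQ
    have hQS : Q * S = 0 := by
      rw [hQ, Matrix.sub_mul, Matrix.one_mul, hSDS, sub_self]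
    have hQidem : Q * Q = Q := by
      have hSDSD : S * D * (S * D) = S * D := by
        rw [← Matrix.mul_assoc, hSDS]
      rw [hQ, Matrix.sub_mul, Matrix.one_mul, Matrix.mul_sub, Matrix.mul_one, hSDSD]
      abel
    have hQC : C * Q = Q * C := by
      rw [hQ, Matrix.mul_sub, Matrix.sub_mul, Matrix.mul_one, Matrix.one_mul]
      congr 1
      calc C * (S * D) = (C * S) * D := by rw [Matrix.mul_assoc]
        _ = S * (C * D) := by rw [hCS, Matrix.mul_assoc]
        _ = S * (D * C) := by rw [hDC]
        _ = S * D * C := by rw [Matrix.mul_assoc]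
    have hQB : ∀ j, B j * Q = Q * B j := by
      intro j
      rw [hQ, Matrix.mul_sub, Matrix.sub_mul, Matrix.mul_one, Matrix.one_mul]
      congr 1
      calc B j * (S * D) = (B j * S) * D := by rw [Matrix.mul_assoc]
        _ = S * (B j * D) := by rw [hSB, Matrix.mul_assoc]
        _ = S * (D * B j) := by rw [hDB]
        _ = S * D * B j := by rw [Matrix.mul_assoc]
    have hCpowS : ∀ m : ℕ, C ^ m * S = S * C ^ m := fun m =>
      ((Commute.pow_left (hCS : Commute C S) m)).eq
    have hCpowQ : ∀ m : ℕ, Q * C ^ m = C ^ m * Q := fun m =>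
      ((Commute.pow_left (hQC.symm : Commute Q C).symm m)).eq.symm
    -- trace of Q * C^(m+1) is zero
    have hTr : ∀ m : ℕ, Matrix.trace (Q * C ^ (m + 1)) = 0 := by
      intro m
      have h1 : Q * C ^ (m + 1) = Q * C ^ m * (∑ j, A j * X * B j) := by
        rw [hX, pow_succ, Matrix.mul_assoc]
      rw [h1, Finset.mul_sum, Matrix.trace_sum]
      have h2 : ∀ j, Matrix.trace (Q * C ^ m * (A j * X * B j)) =
          Matrix.trace (Q * C ^ m * (A j * B j) * X) := by
        intro j
        calc Matrix.trace (Q * C ^ m * (A j * X * B j))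
            = Matrix.trace ((Q * C ^ m * (A j * X)) * B j) := by
              simp only [Matrix.mul_assoc]
          _ = Matrix.trace (B j * (Q * C ^ m * (A j * X))) := by
              rw [Matrix.trace_mul_comm]
          _ = Matrix.trace (((B j * Q) * C ^ m * A j) * X) := by
              simp only [Matrix.mul_assoc]
          _ = Matrix.trace ((Q * (B j * C ^ m) * A j) * X) := by
              rw [hQB]; simp only [Matrix.mul_assoc]
          _ = Matrix.trace ((Q * (C ^ m * B j) * A j) * X) := by
              rw [(Commute.pow_right (hBC j : Commute (B j) C) m).eq]
          _ = Matrix.trace (Q * C ^ m * (B j * A j) * X) := by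
              simp only [Matrix.mul_assoc]
          _ = Matrix.trace (Q * C ^ m * (A j * B j) * X) := by
              rw [hAB]
      calc ∑ j, Matrix.trace (Q * C ^ m * (A j * X * B j))
          = ∑ j, Matrix.trace (Q * C ^ m * (A j * B j) * X) :=
            Finset.sum_congr rfl fun j _ => h2 j
        _ = Matrix.trace (Q * C ^ m * S * X) := by
            rw [hS, Finset.mul_sum, Finset.sum_mul, Matrix.trace_sum]
        _ = 0 := by
            rw [Matrix.mul_assoc Q (C ^ m) S, hCpowS, ← Matrix.mul_assoc, hQS]
            simp
    -- trace of g(C) * Q is zero for any polynomial with zero constant term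
    have hQg : ∀ g : ℂ[X], g.coeff 0 = 0 →
        Matrix.trace (Polynomial.aeval C g * Q) = 0 := by
      intro g hg0
      conv_lhs => rw [g.as_sum_support]
      rw [map_sum, Finset.sum_mul, Matrix.trace_sum]
      refine Finset.sum_eq_zero fun i hi => ?_
      have hi0 : i ≠ 0 := by
        intro h
        exact (Polynomial.mem_support_iff.mp hi) (h ▸ hg0)
      obtain ⟨t, rfl⟩ := Nat.exists_eq_succ_of_ne_zero hi0
      rw [aeval_monomial, Algebra.algebraMap_eq_smul_one, smul_mul_assoc, smul_mul_assoc,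
        Matrix.one_mul, Matrix.trace_smul, Matrix.trace_mul_comm, hTr t, smul_zero]
    -- pass to the diagonalizing basis of C
    obtain ⟨P, c, hP, hPC⟩ := hdC
    have hC : C = P * diagonal c * P⁻¹ := conj_eq hP hPC
    set Q' : Matrix (Fin n) (Fin n) ℂ := P⁻¹ * Q * P with hQ'def
    have hPP : P * P⁻¹ = 1 := Matrix.mul_nonsing_inv P hP
    have hPP' : P⁻¹ * P = 1 := Matrix.nonsing_inv_mul P hP
    have hQback : Q = P * Q' * P⁻¹ := by
      rw [hQ'def]
      calc Q = (P * P⁻¹) * Q * (P * P⁻¹) := by rw [hPP]; simp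
        _ = P * (P⁻¹ * Q * P) * P⁻¹ := by simp only [Matrix.mul_assoc]
    have hQ'idem : Q' * Q' = Q' := by
      rw [hQ'def]
      calc P⁻¹ * Q * P * (P⁻¹ * Q * P) = P⁻¹ * (Q * (P * P⁻¹) * Q) * P := by
            simp only [Matrix.mul_assoc]
        _ = P⁻¹ * (Q * Q) * P := by rw [hPP]; simp only [Matrix.mul_one]
        _ = P⁻¹ * Q * P := by rw [hQidem, Matrix.mul_assoc]
    have hQ'diag : Q' * diagonal c = diagonal c * Q' := by
      have h1 : diagonal c = P⁻¹ * C * P := hPC.symm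
      rw [hQ'def, h1]
      calc P⁻¹ * Q * P * (P⁻¹ * C * P) = P⁻¹ * (Q * (P * P⁻¹) * C) * P := by
            simp only [Matrix.mul_assoc]
        _ = P⁻¹ * (Q * C) * P := by rw [hPP]; simp only [Matrix.mul_one]
        _ = P⁻¹ * (C * Q) * P := by rw [hQC]
        _ = P⁻¹ * (C * (P * P⁻¹) * Q) * P := by rw [hPP]; simp only [Matrix.mul_one]
        _ = P⁻¹ * C * P * (P⁻¹ * Q * P) := by simp only [Matrix.mul_assoc]
    have hoff : ∀ p q : Fin n, c p ≠ c q → Q' p q = 0 := by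
      intro p q hpq
      have h1 := congrFun (congrFun hQ'diag p) q
      rw [Matrix.mul_diagonal, Matrix.diagonal_mul] at h1
      have h2 : Q' p q * (c q - c p) = 0 := by
        rw [mul_sub, h1]; ring
      rcases mul_eq_zero.mp h2 with h | h
      · exact h
      · exact absurd (sub_eq_zero.mp h).symm hpq
    -- block-wise vanishing of Q'
    have hzero : ∀ lam : ℂ, lam ≠ 0 → ∀ p q : Fin n, c p = lam → c q = lam → Q' p q = 0 := by
      intro lam hlam0 p q hp hq
      set F : Finset (Fin n) := Finset.univ.filter (fun x => c x = lam) with hF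
      -- an interpolating polynomial
      obtain ⟨g, hg0, hgev⟩ : ∃ g : ℂ[X], g.coeff 0 = 0 ∧
          ∀ z ∈ insert (0 : ℂ) (Finset.image c Finset.univ),
            g.eval z = if z = lam then 1 else 0 := by
        refine ⟨Lagrange.interpolate (insert (0 : ℂ) (Finset.image c Finset.univ)) id
          (fun z => if z = lam then 1 else 0), ?_, ?_⟩
        · rw [Polynomial.coeff_zero_eq_eval_zero]
          have := Lagrange.eval_interpolate_at_node
            (v := (id : ℂ → ℂ)) (r := fun z => if z = lam then 1 else 0)
            (s := insert (0 : ℂ) (Finset.image c Finset.univ))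
            (Set.injOn_id _) (Finset.mem_insert_self _ _)
          simp only [id_eq] at this
          rw [this, if_neg (fun h => hlam0 h.symm)]
        · intro z hz
          have := Lagrange.eval_interpolate_at_node
            (v := (id : ℂ → ℂ)) (r := fun z => if z = lam then 1 else 0)
            (s := insert (0 : ℂ) (Finset.image c Finset.univ))
            (Set.injOn_id _) hz
          simpa using this
      have htr0 := hQg g hg0
      -- rewrite the trace in the diagonalizing basis
      have h3 : Polynomial.aeval C g * Q = P * (diagonal (fun i => g.eval (c i)) * (P⁻¹ * Q)) := by
        rw [hC, aeval_conj hP, aeval_diagonal]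
        simp only [Matrix.mul_assoc]
      rw [h3, Matrix.trace_mul_comm] at htr0
      have h4 : diagonal (fun i => g.eval (c i)) * (P⁻¹ * Q) * P
          = diagonal (fun i => g.eval (c i)) * Q' := by
        rw [hQ'def]; simp only [Matrix.mul_assoc]
      rw [h4] at htr0
      have h5 : Matrix.trace (diagonal (fun i => g.eval (c i)) * Q')
          = ∑ x : Fin n, g.eval (c x) * Q' x x := by
        simp [Matrix.trace, Matrix.diag, Matrix.diagonal_mul]
      rw [h5] at htr0
      have h6 : ∀ x : Fin n, g.eval (c x) * Q' x x = if c x = lam then Q' x x else 0 := by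
        intro x
        rw [hgev (c x) (Finset.mem_insert_of_mem (Finset.mem_image_of_mem c (Finset.mem_univ x)))]
        by_cases hx : c x = lam <;> simp [hx]
      rw [Finset.sum_congr rfl (fun x _ => h6 x)] at htr0
      rw [← Finset.sum_filter] at htr0
      -- htr0 : ∑ x in F, Q' x x = 0
      have hmemF : ∀ x : Fin n, x ∈ F ↔ c x = lam := by
        intro x; rw [hF, Finset.mem_filter]; simp
      -- the corner block of Q'
      set E : Matrix {x : Fin n // c x = lam} {x : Fin n // c x = lam} ℂ :=
        Matrix.of (fun i j => Q' i.1 j.1) with hE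
      have hEidem : E * E = E := by
        ext i j
        show ∑ r : {x : Fin n // c x = lam}, Q' i.1 r.1 * Q' r.1 j.1 = Q' i.1 j.1
        have hfull : ∑ r : Fin n, Q' i.1 r * Q' r j.1 = Q' i.1 j.1 := by
          have := congrFun (congrFun hQ'idem i.1) j.1
          rwa [Matrix.mul_apply] at this
        have hsub : ∑ r ∈ F, Q' i.1 r * Q' r j.1 = ∑ r : Fin n, Q' i.1 r * Q' r j.1 := by
          apply Finset.sum_subset (by intro x _; exact Finset.mem_univ x)
          intro x _ hx
          have hcx : c x ≠ lam := by
            intro hcontra; exact hx ((hmemF x).mpr hcontra)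
          rw [hoff i.1 x (by rw [i.2]; exact fun hh => hcx hh.symm), zero_mul]
        rw [← (Finset.sum_subtype F hmemF (fun r => Q' i.1 r * Q' r j.1)), hsub, hfull]
      have hEtr : E.trace = 0 := by
        have : E.trace = ∑ r : {x : Fin n // c x = lam}, Q' r.1 r.1 := by
          simp [Matrix.trace, Matrix.diag, hE]
        rw [this, ← (Finset.sum_subtype F hmemF (fun r => Q' r r))]
        exact htr0
      have hE0 : E = 0 := idem_eq_zero_of_trace hEidem hEtr
      have := congrFun (congrFun hE0 ⟨p, hp⟩) ⟨q, hq⟩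
      simpa [hE] using this
    have hentry : ∀ p q : Fin n, Q' p q * c q = 0 := by
      intro p q
      by_cases h0 : c q = 0
      · rw [h0, mul_zero]
      · by_cases hpq : c p = c q
        · rw [hzero (c q) h0 p q hpq rfl, zero_mul]
        · rw [hoff p q hpq, zero_mul]
    have hQ'D0 : Q' * diagonal c = 0 := by
      ext p q
      rw [Matrix.mul_diagonal]
      exact hentry p q
    have hQC0 : Q * C = 0 := by
      rw [hQback, hC]
      have hassoc : P * Q' * P⁻¹ * (P * diagonal c * P⁻¹)
          = P * (Q' * (P⁻¹ * P) * diagonal c) * P⁻¹ := by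
        simp only [Matrix.mul_assoc]
      rw [hassoc, hPP', Matrix.mul_one, hQ'D0, Matrix.mul_zero, Matrix.zero_mul]
    have hSDC : S * D * C = C := by
      rw [hQ] at hQC0
      rw [Matrix.sub_mul, Matrix.one_mul, sub_eq_zero] at hQC0
      exact hQC0.symm
    rw [hsumDC]
    calc D * C * S = D * (C * S) := by rw [Matrix.mul_assoc]
      _ = D * (S * C) := by rw [hCS]
      _ = D * S * C := by rw [Matrix.mul_assoc]
      _ = S * D * C := by rw [← hSD]
      _ = C := hSDC
  · intro h
    exact ⟨D * C, h⟩
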